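/- For each i ∈ {1,…,d} let (a^{(i)}_n)_{n∈ℕ^d} be reals defining the linear operator 𝔡_i p = ∑_{n∈ℕ^d} a^{(i)}_n ∂_{x₁}^{n₁}⋯∂_{x_d}^{n_d} p on ℝ[x₁,…,x_d] (a finite sum on each polynomial), and assume (𝔡₁,…,𝔡_d) is a system of delta operators. Then (𝔡₁,…,𝔡_d) is a strict system — i.e., for every i and every polynomial p: if the degree of p in the variable x_i is m ≥ 1 then the degree of 𝔡_i p in x_i is exactly m−1, and if p does not involve x_i then 𝔡_i p = 0 — if and only if for every i one has a^{(i)}_n = 0 whenever n_i = 0, and a^{(i)}_{e_i} ≠ 0. -/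

import Mathlib

open MvPolynomial

noncomputable section

/-- The algebra of real polynomials in `d` variables `x₁, …, x_d`. -/
abbrev MvP (d : ℕ) := MvPolynomial (Fin d) ℝ

/-- The shift operator `E_v : p(x) ↦ p(x + v)`. -/
def shiftOp {d : ℕ} (v : Fin d → ℝ) : Module.End ℝ (MvP d) :=
  (MvPolynomial.aeval (fun i => X i + C (v i)) : MvP d →ₐ[ℝ] MvP d).toLinearMap

/-- A linear operator on `ℝ[x₁,…,x_d]` is shift-invariant if it commutes with
every shift operator. -/
def ShiftInv {d : ℕ} (L : Module.End ℝ (MvP d)) : Prop :=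
  ∀ v : Fin d → ℝ, L * shiftOp v = shiftOp v * L

/-- `(𝔡₁, …, 𝔡_d)` is a system of delta operators: each `𝔡_i` is shift-invariant,
each `𝔡_i` maps every homogeneous linear polynomial to a constant, and for a
nonzero homogeneous linear polynomial at least one `𝔡_i p` is nonzero. -/
def IsDeltaSystem {d : ℕ} (D : Fin d → Module.End ℝ (MvP d)) : Prop :=
  (∀ i, ShiftInv (D i)) ∧
  ∀ a : Fin d → ℝ,
    (∀ i, ∃ c : ℝ, D i (∑ j, C (a j) * X j) = C c) ∧
    ((∑ j, C (a j) * X j) ≠ 0 → ∃ i, D i (∑ j, C (a j) * X j) ≠ 0)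

/-- The composite partial-derivative operator `∂^n = ∂₁^{n₁} ∘ ⋯ ∘ ∂_d^{n_d}`. -/
def pdpow {d : ℕ} (n : Fin d → ℕ) : Module.End ℝ (MvP d) :=
  (List.ofFn fun i => ((MvPolynomial.pderiv (R := ℝ) i).toLinearMap) ^ (n i)).prod

/-- `(𝔡₁,…,𝔡_d)` is a strict system: each `𝔡_i` reduces the degree in the
variable `x_i` by exactly one, and kills polynomials not involving `x_i`. -/
def IsStrictSystem {d : ℕ} (D : Fin d → Module.End ℝ (MvP d)) : Prop :=
  ∀ (i : Fin d) (p : MvP d),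
    (1 ≤ degreeOf i p → degreeOf i (D i p) = degreeOf i p - 1) ∧
    (degreeOf i p = 0 → D i p = 0)

-- Auxiliary lemmas for strict_system_iff
abbrev pd {d : ℕ} (i : Fin d) : Module.End ℝ (MvP d) := (pderiv (R := ℝ) i).toLinearMap

def nf {d : ℕ} (n : Fin d → ℕ) : Fin d →₀ ℕ := Finsupp.equivFunOnFinite.symm n

@[simp] lemma nf_apply {d : ℕ} (n : Fin d → ℕ) (j : Fin d) : nf n j = n j := rfl

lemma nf_eq_sum {d : ℕ} (n : Fin d → ℕ) : nf n = ∑ j, Finsupp.single j (n j) := by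
  ext k
  rw [nf_apply, Finsupp.finset_sum_apply, Finset.sum_eq_single k]
  · simp
  · intro b _ hb; simp [Finsupp.single_apply, hb]
  · simp

lemma nf_pi_single {d : ℕ} (i : Fin d) : nf (Pi.single i (1:ℕ)) = Finsupp.single i 1 := by
  ext k
  rw [nf_apply, Finsupp.single_apply, Pi.single_apply]
  simp [eq_comm]

lemma pd_pow_monomial {d : ℕ} (i : Fin d) (k : ℕ) (M : Fin d →₀ ℕ) (c : ℝ) :
    (pd i ^ k) (monomial M c) =
      monomial (M - Finsupp.single i k) (c * ((M i).descFactorial k : ℝ)) := by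
  induction k with
  | zero => simp
  | succ k ih =>
    rw [pow_succ', Module.End.mul_apply, ih]
    show pderiv i _ = _
    rw [pderiv_monomial, tsub_tsub, ← Finsupp.single_add,
      Finsupp.tsub_apply, Finsupp.single_eq_same, Nat.descFactorial_succ, Nat.cast_mul]
    ring_nf

lemma sum_single_apply_ne {d : ℕ} (n : Fin d → ℕ) (i : Fin d) :
    ∀ l : List (Fin d), i ∉ l → ((l.map fun j => Finsupp.single j (n j)).sum) i = 0
  | [], _ => by simp
  | j :: l, h => by
    simp only [List.map_cons, List.sum_cons, Finsupp.add_apply]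
    rw [sum_single_apply_ne n i l (fun hm => h (List.mem_cons_of_mem _ hm)),
      Finsupp.single_apply]
    have hj : j ≠ i := fun hj => h (hj ▸ List.mem_cons_self)
    rw [if_neg hj, add_zero]

lemma list_prod_pd_monomial {d : ℕ} (n : Fin d → ℕ) :
    ∀ l : List (Fin d), l.Nodup → ∀ (M : Fin d →₀ ℕ) (c : ℝ),
    ((l.map fun i => pd (d := d) i ^ n i).prod) (monomial M c)
      = monomial (M - (l.map fun i => Finsupp.single i (n i)).sum)
        (c * (l.map fun i => ((M i).descFactorial (n i) : ℝ)).prod)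
  | [], _, M, c => by simp
  | i :: l, hnd, M, c => by
    simp only [List.map_cons, List.prod_cons, List.sum_cons, Module.End.mul_apply]
    rw [list_prod_pd_monomial n l hnd.of_cons M c, pd_pow_monomial]
    have hi : i ∉ l := (List.nodup_cons.mp hnd).1
    have hS : (M - (l.map fun j => Finsupp.single j (n j)).sum) i = M i := by
      rw [Finsupp.tsub_apply, sum_single_apply_ne n i l hi, Nat.sub_zero]
    rw [hS, tsub_tsub, add_comm]
    ring_nf

lemma pdpow_monomial {d : ℕ} (n : Fin d → ℕ) (M : Fin d →₀ ℕ) (c : ℝ) :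
    pdpow n (monomial M c)
      = monomial (M - nf n) (c * ∏ j, ((M j).descFactorial (n j) : ℝ)) := by
  rw [pdpow, List.ofFn_eq_map,
    list_prod_pd_monomial n (List.finRange d) (List.nodup_finRange d) M c]
  rw [show ((List.finRange d).map fun i => Finsupp.single i (n i)).sum = nf n by
      rw [nf_eq_sum, ← List.ofFn_eq_map, List.sum_ofFn],
    show ((List.finRange d).map fun i => ((M i).descFactorial (n i) : ℝ)).prod
        = ∏ j, ((M j).descFactorial (n j) : ℝ) by rw [← List.ofFn_eq_map, List.prod_ofFn]]

lemma pdpow_eq_zero {d : ℕ} {p : MvP d} {n : Fin d → ℕ} (j : Fin d)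
    (h : degreeOf j p < n j) : pdpow n p = 0 := by
  conv_lhs => rw [p.as_sum, map_sum]
  apply Finset.sum_eq_zero
  intro M hM
  rw [pdpow_monomial]
  have h0 : ((M j).descFactorial (n j) : ℝ) = 0 := by
    rw [Nat.descFactorial_of_lt (lt_of_le_of_lt (monomial_le_degreeOf j hM) h)]
    simp
  rw [Finset.prod_eq_zero (Finset.mem_univ j) h0, mul_zero, map_zero]

/-- A finite index set capturing the support of `n ↦ b n • pdpow n p`. -/
def Tset {d : ℕ} (p : MvP d) : Finset (Fin d → ℕ) :=
  Fintype.piFinset fun j => Finset.Iic (degreeOf j p)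

lemma finsum_pdpow_eq {d : ℕ} (b : (Fin d → ℕ) → ℝ) (p : MvP d) :
    (∑ᶠ n : Fin d → ℕ, b n • pdpow n p) = ∑ n ∈ Tset p, b n • pdpow n p := by
  apply finsum_eq_sum_of_support_subset
  intro n hn
  simp only [Function.mem_support] at hn
  simp only [Tset, Finset.coe_sort_coe, Fintype.coe_piFinset, Set.mem_pi, Set.mem_univ,
    Finset.mem_coe, Finset.mem_Iic, forall_true_left]
  intro j
  by_contra hj
  exact hn (by rw [pdpow_eq_zero j (not_le.mp hj), smul_zero])

lemma degreeOf_monomial_one {d : ℕ} (M : Fin d →₀ ℕ) (j : Fin d) :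
    degreeOf j (monomial M (1:ℝ)) = M j := by
  classical
  rw [degreeOf_eq_sup, support_monomial]
  simp

theorem fwd {d : ℕ} (hd : 1 ≤ d)
    (a : Fin d → (Fin d → ℕ) → ℝ)
    (D : Fin d → Module.End ℝ (MvP d))
    (hD : ∀ (i : Fin d) (p : MvP d), D i p = ∑ᶠ n : Fin d → ℕ, a i n • pdpow n p)
    (hsys : IsDeltaSystem D) (hstrict : IsStrictSystem D) :
    ∀ i : Fin d, (∀ n : Fin d → ℕ, n i = 0 → a i n = 0) ∧
        a i (Pi.single i 1) ≠ 0 := by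
  have hDsum : ∀ (i : Fin d) (p : MvP d), D i p = ∑ n ∈ Tset p, a i n • pdpow n p := by
    intro i p; rw [hD i p, finsum_pdpow_eq]
  intro i
  have key : ∀ n : Fin d → ℕ, n i = 0 → a i n = 0 := by
    intro n hn
    set M : Fin d →₀ ℕ := nf n with hMdef
    have hdeg : degreeOf i (monomial M (1:ℝ)) = 0 := by
      rw [degreeOf_monomial_one]; exact hn
    have h0 : D i (monomial M (1:ℝ)) = 0 := (hstrict i _).2 hdeg
    have hc := congrArg (coeff 0) h0
    rw [hDsum, coeff_sum] at hc
    simp only [coeff_zero] at hc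
    rw [Finset.sum_eq_single n] at hc
    · -- hc : coeff 0 (a i n • pdpow n (monomial M 1)) = 0
      rw [coeff_smul, pdpow_monomial] at hc
      have hMn : M - nf n = 0 := by simp [hMdef]
      rw [hMn, coeff_monomial, if_pos rfl, one_mul, smul_eq_mul] at hc
      have hfac : (∏ j, (((M j).descFactorial (n j)) : ℝ)) ≠ 0 := by
        apply Finset.prod_ne_zero_iff.mpr
        intro j _
        have : M j = n j := rfl
        rw [this, Nat.descFactorial_self]
        exact_mod_cast (Nat.factorial_pos (n j)).ne'
      exact (mul_eq_zero.mp hc).resolve_right hfac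
    · intro n' hn' hne
      rw [coeff_smul, pdpow_monomial, coeff_monomial]
      have hn'le : ∀ j, n' j ≤ n j := by
        intro j
        have := (Fintype.mem_piFinset.mp hn') j
        rwa [Finset.mem_Iic, degreeOf_monomial_one] at this
      have hMn : M - nf n' ≠ 0 := by
        intro h
        apply hne
        funext j
        have hj : M j - n' j = 0 := by
          have h2 : (M - nf n') j = 0 := by rw [h]; rfl
          rwa [Finsupp.tsub_apply] at h2
        have : n j ≤ n' j := by
          have : M j = n j := rfl
          omega
        exact le_antisymm (hn'le j) this
      rw [if_neg hMn, smul_zero]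
    · intro hnot
      exfalso
      apply hnot
      simp only [Tset, Fintype.mem_piFinset]
      intro j
      rw [Finset.mem_Iic, degreeOf_monomial_one]
      exact le_of_eq rfl
  refine ⟨key, ?_⟩
  -- compute D i (X i)
  have hXi : (X i : MvP d) = monomial (Finsupp.single i 1) 1 := rfl
  have hdegX : ∀ j, degreeOf j (X i : MvP d) = Finsupp.single i 1 j := by
    intro j; rw [hXi, degreeOf_monomial_one]
  have hcomp : D i (X i) = a i (Pi.single i 1) • (1 : MvP d) := by
    rw [hDsum]
    rw [Finset.sum_eq_single (Pi.single i (1:ℕ))]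
    · rw [hXi, pdpow_monomial, nf_pi_single, tsub_self]
      have hprod : (∏ j, (((Finsupp.single i 1 : Fin d →₀ ℕ) j).descFactorial
          ((Pi.single i 1 : Fin d → ℕ) j) : ℝ)) = 1 := by
        apply Finset.prod_eq_one
        intro j _
        rcases eq_or_ne j i with h | h
        · subst h; simp
        · simp [Finsupp.single_apply, Pi.single_apply, h]
      rw [hprod, one_mul]
      congr 1
    · intro n hnT hne
      have hni : n i = 0 := by
        have h1 := (Fintype.mem_piFinset.mp hnT) i
        rw [Finset.mem_Iic, hdegX i, Finsupp.single_eq_same] at h1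
        rcases Nat.lt_or_ge (n i) 1 with h | h
        · omega
        · exfalso
          apply hne
          funext j
          rcases eq_or_ne j i with hj | hj
          · subst hj; simp; omega
          · have := (Fintype.mem_piFinset.mp hnT) j
            rw [Finset.mem_Iic, hdegX j, Finsupp.single_apply, if_neg (by exact fun h => hj h.symm)] at this
            simp [Pi.single_apply, hj]; omega
      rw [key n hni, zero_smul]
    · intro hnot
      exfalso; apply hnot
      simp only [Tset, Fintype.mem_piFinset]
      intro j
      rw [Finset.mem_Iic, hdegX j]
      rcases eq_or_ne j i with h | h
      · subst h; simp
      · simp [Finsupp.single_apply, Pi.single_apply, h, eq_comm]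
  -- use the delta-system axiom
  have h1 : ∀ j, j ≠ i → (C ((Pi.single i 1 : Fin d → ℝ) j) : MvP d) * X j = 0 := by
    intro j hj
    rw [Pi.single_eq_of_ne hj, map_zero, zero_mul]
  have hXsum : (∑ j, C ((Pi.single i 1 : Fin d → ℝ) j) * X j) = (X i : MvP d) := by
    rw [Fintype.sum_eq_single i h1, Pi.single_eq_same, map_one, one_mul]
  obtain ⟨k, hk⟩ := (hsys.2 (Pi.single i (1:ℝ))).2 (by rw [hXsum]; exact X_ne_zero i)
  rw [hXsum] at hk
  have hki : k = i := by
    by_contra hne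
    exact hk ((hstrict k _).2 (by rw [hdegX k, Finsupp.single_apply, if_neg (fun h => hne h.symm)]))
  rw [hki, hcomp] at hk
  intro h
  exact hk (by rw [h, zero_smul])

theorem bwd {d : ℕ}
    (a : Fin d → (Fin d → ℕ) → ℝ)
    (D : Fin d → Module.End ℝ (MvP d))
    (hD : ∀ (i : Fin d) (p : MvP d), D i p = ∑ᶠ n : Fin d → ℕ, a i n • pdpow n p)
    (hcoef : ∀ i : Fin d, (∀ n : Fin d → ℕ, n i = 0 → a i n = 0) ∧
        a i (Pi.single i 1) ≠ 0) :
    IsStrictSystem D := by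
  have hDsum : ∀ (i : Fin d) (p : MvP d), D i p = ∑ n ∈ Tset p, a i n • pdpow n p := by
    intro i p; rw [hD i p, finsum_pdpow_eq]
  intro i p
  constructor
  · intro hm
    set m := degreeOf i p with hmdef
    have hub : ∀ K : Fin d →₀ ℕ, K ∈ (D i p).support → K i ≤ m - 1 := by
      intro K hK
      by_contra hgt
      push_neg at hgt
      apply mem_support_iff.mp hK
      rw [hDsum, coeff_sum]
      apply Finset.sum_eq_zero
      intro n hnT
      rw [coeff_smul, smul_eq_mul]
      rcases Nat.eq_zero_or_pos (n i) with h | h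
      · rw [(hcoef i).1 n h, zero_mul]
      · have hz : coeff K (pdpow n p) = 0 := by
          conv_lhs => rw [p.as_sum, map_sum, coeff_sum]
          apply Finset.sum_eq_zero
          intro M hM
          rw [pdpow_monomial, coeff_monomial]
          split_ifs with hcond
          · exfalso
            have hKi : K i = M i - n i := by
              rw [← hcond, Finsupp.tsub_apply, nf_apply]
            have hMi : M i ≤ m := monomial_le_degreeOf i hM
            omega
          · rfl
        rw [hz, mul_zero]
    have hp : p ≠ 0 := by
      intro h
      rw [hmdef, h, degreeOf_zero] at hm
      exact absurd hm (by norm_num)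
    obtain ⟨M1, hM1mem, hM1⟩ :=
      Finset.exists_mem_eq_sup p.support (support_nonempty.mpr hp) (fun M => M i)
    set s := p.support.filter (fun M => M i = m) with hsdef
    have hsne : s.Nonempty :=
      ⟨M1, Finset.mem_filter.mpr ⟨hM1mem, by rw [hmdef, degreeOf_eq_sup, hM1]⟩⟩
    obtain ⟨M0, hM0s, hmax⟩ :=
      Finset.exists_max_image s (fun M => ∑ j ∈ Finset.univ.erase i, M j) hsne
    have hM0mem : M0 ∈ p.support := (Finset.mem_filter.mp hM0s).1
    have hM0i : M0 i = m := by
      have := (Finset.mem_filter.mp hM0s).2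
      simpa using this
    set K := M0 - Finsupp.single i 1 with hKdef
    have hKi : K i = m - 1 := by
      rw [hKdef, Finsupp.tsub_apply, Finsupp.single_eq_same, hM0i]
    have hKj : ∀ j, j ≠ i → K j = M0 j := by
      intro j hj
      rw [hKdef, Finsupp.tsub_apply, Finsupp.single_apply, if_neg (fun h => hj h.symm),
        Nat.sub_zero]
    have hsle : Finsupp.single i 1 ≤ M0 := by
      rw [Finsupp.single_le_iff]; omega
    have hKM0 : K + Finsupp.single i 1 = M0 := by
      rw [hKdef]; exact tsub_add_cancel_of_le hsle
    have hcoeff : coeff K (D i p) = a i (Pi.single i 1) * (coeff M0 p * (m : ℝ)) := by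
      rw [hDsum, coeff_sum]
      rw [Finset.sum_eq_single (Pi.single i (1:ℕ))]
      · rw [coeff_smul, smul_eq_mul]
        congr 1
        conv_lhs => rw [p.as_sum, map_sum, coeff_sum]
        rw [Finset.sum_eq_single M0]
        · rw [pdpow_monomial, nf_pi_single, coeff_monomial, if_pos hKdef.symm]
          congr 1
          have hother : ∀ j, j ≠ i →
              ((M0 j).descFactorial ((Pi.single i 1 : Fin d → ℕ) j) : ℝ) = 1 := by
            intro j hj
            rw [Pi.single_eq_of_ne hj, Nat.descFactorial_zero, Nat.cast_one]
          rw [Fintype.prod_eq_single i hother, Pi.single_eq_same, Nat.descFactorial_one, hM0i]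
        · intro M hM hMne
          rw [pdpow_monomial, nf_pi_single, coeff_monomial]
          split_ifs with hcond
          · rcases Nat.eq_zero_or_pos (M i) with h0 | h0
            · have hzero : ((M i).descFactorial ((Pi.single i 1 : Fin d → ℕ) i) : ℝ) = 0 := by
                rw [Pi.single_eq_same, h0, Nat.zero_descFactorial_succ, Nat.cast_zero]
              rw [Finset.prod_eq_zero (Finset.mem_univ i) hzero, mul_zero]
            · exfalso
              apply hMne
              have hle : Finsupp.single i 1 ≤ M := by rw [Finsupp.single_le_iff]; omega
              calc M = M - Finsupp.single i 1 + Finsupp.single i 1 :=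
                    (tsub_add_cancel_of_le hle).symm
                _ = K + Finsupp.single i 1 := by rw [hcond]
                _ = M0 := hKM0
          · rfl
        · intro h; exact absurd hM0mem h
      · intro n hnT hne
        rw [coeff_smul, smul_eq_mul]
        rcases Nat.eq_zero_or_pos (n i) with h | h
        · rw [(hcoef i).1 n h, zero_mul]
        have hz : coeff K (pdpow n p) = 0 := by
          conv_lhs => rw [p.as_sum, map_sum, coeff_sum]
          apply Finset.sum_eq_zero
          intro M hM
          rw [pdpow_monomial, coeff_monomial]
          split_ifs with hcond
          · by_cases hle : ∀ j, n j ≤ M j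
            · exfalso
              have hnfle : nf n ≤ M := by rw [Finsupp.le_def]; intro j; exact hle j
              have hMK : M = K + nf n := by
                rw [← hcond, tsub_add_cancel_of_le hnfle]
              have hMi : M i = (m - 1) + n i := by
                rw [hMK, Finsupp.add_apply, nf_apply, hKi]
              have hMim : M i ≤ m := monomial_le_degreeOf i hM
              have hni1 : n i = 1 := by omega
              have hMim : M i = m := by omega
              have hMs : M ∈ s := Finset.mem_filter.mpr ⟨hM, by simpa using hMim⟩
              have hex : ∃ j, j ≠ i ∧ 1 ≤ n j := by
                by_contra hnot
                push_neg at hnot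
                apply hne
                funext j
                rcases eq_or_ne j i with hj | hj
                · rw [hj, hni1, Pi.single_eq_same]
                · have := hnot j hj; rw [Pi.single_eq_of_ne hj]; omega
              obtain ⟨j0, hj0, hnj0⟩ := hex
              have hwM : (∑ j ∈ Finset.univ.erase i, M j)
                  = (∑ j ∈ Finset.univ.erase i, M0 j) + ∑ j ∈ Finset.univ.erase i, n j := by
                rw [← Finset.sum_add_distrib]
                apply Finset.sum_congr rfl
                intro j hj
                have hji : j ≠ i := (Finset.mem_erase.mp hj).1
                rw [hMK, Finsupp.add_apply, nf_apply, hKj j hji]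
              have hwn : 1 ≤ ∑ j ∈ Finset.univ.erase i, n j :=
                le_trans hnj0 (Finset.single_le_sum (fun _ _ => Nat.zero_le _)
                  (Finset.mem_erase.mpr ⟨hj0, Finset.mem_univ _⟩))
              have hle' := hmax M hMs
              omega
            · push_neg at hle
              obtain ⟨j, hj⟩ := hle
              have hzero : ((M j).descFactorial (n j) : ℝ) = 0 := by
                rw [Nat.descFactorial_of_lt hj, Nat.cast_zero]
              rw [Finset.prod_eq_zero (Finset.mem_univ j) hzero, mul_zero]
          · rfl
        rw [hz, mul_zero]
      · intro hnot
        exfalso; apply hnot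
        simp only [Tset, Fintype.mem_piFinset]
        intro j
        rw [Finset.mem_Iic]
        rcases eq_or_ne j i with hj | hj
        · rw [hj, Pi.single_eq_same]; exact hm
        · rw [Pi.single_eq_of_ne hj]; exact Nat.zero_le _
    have hKne : coeff K (D i p) ≠ 0 := by
      rw [hcoeff]
      exact mul_ne_zero (hcoef i).2 (mul_ne_zero (mem_support_iff.mp hM0mem)
        (Nat.cast_ne_zero.mpr (by omega)))
    have hlb : m - 1 ≤ degreeOf i (D i p) :=
      hKi ▸ monomial_le_degreeOf i (mem_support_iff.mpr hKne)
    exact le_antisymm (degreeOf_le_iff.mpr hub) hlb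
  · intro h0
    rw [hDsum]
    apply Finset.sum_eq_zero
    intro n _
    rcases Nat.eq_zero_or_pos (n i) with h | h
    · rw [(hcoef i).1 n h, zero_smul]
    · rw [pdpow_eq_zero i (by rw [h0]; exact h), smul_zero]


/-- a system of delta operators `𝔡_i = ∑_n a^{(i)}_n ∂^n` is strict
iff for every `i`: `a^{(i)}_n = 0` whenever `n_i = 0`, and `a^{(i)}_{e_i} ≠ 0`. -/
theorem strict_system_iff {d : ℕ} (hd : 1 ≤ d)
    (a : Fin d → (Fin d → ℕ) → ℝ)
    (D : Fin d → Module.End ℝ (MvP d))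
    (hD : ∀ (i : Fin d) (p : MvP d), D i p = ∑ᶠ n : Fin d → ℕ, a i n • pdpow n p)
    (hsys : IsDeltaSystem D) :
    IsStrictSystem D ↔
      ∀ i : Fin d, (∀ n : Fin d → ℕ, n i = 0 → a i n = 0) ∧
        a i (Pi.single i 1) ≠ 0 := by
  exact ⟨fun h => fwd hd a D hD hsys h, fun h => bwd a D hD h⟩

end
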